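/- Fix δ ∈ (0,1). With probability at least 1 − δ, simultaneously for every f ∈ F and every τ ∈ ℕ: Σ_{t=1}^{τ} M_t(f) ≤ (3/2)·Σ_{t=1}^{τ} Q_t·(f(x_t) − f⋆(x_t))² + log(2|F|/δ), and Σ_{t=1}^{τ} Q_t·(f(x_t) − f⋆(x_t))² ≤ 2·Σ_{t=1}^{τ} M_t(f) + 2·log(2|F|/δ). -/

import Mathlib

open MeasureTheory Real Filter

lemma hoeffding_scalar {p : ℝ} (hp0 : 0 ≤ p) (hp1 : p ≤ 1) (u : ℝ) :
    (1 - p) * Real.exp (-(u * p)) + p * Real.exp (u * (1 - p)) ≤ Real.exp (u ^ 2 / 8) := by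
  have hD : ∀ v : ℝ, 0 < 1 - p + p * Real.exp v := by
    intro v
    rcases eq_or_lt_of_le hp0 with h | h
    · simp [← h]
    · have := Real.exp_pos v
      nlinarith
  -- derivative facts
  have hDd : ∀ v : ℝ, HasDerivAt (fun w => 1 - p + p * Real.exp w) (p * Real.exp v) v := by
    intro v
    simpa using ((Real.hasDerivAt_exp v).const_mul p).const_add (1 - p)
  set φ : ℝ → ℝ := fun v => Real.log (1 - p + p * Real.exp v) with hφdef
  have hφ : ∀ v : ℝ, HasDerivAt φ (p * Real.exp v / (1 - p + p * Real.exp v)) v := by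
    intro v
    exact (hDd v).log (hD v).ne'
  set g1 : ℝ → ℝ := fun v => p + v / 4 - p * Real.exp v / (1 - p + p * Real.exp v) with hg1def
  have hg1 : ∀ v : ℝ, HasDerivAt g1
      (1 / 4 - (p * Real.exp v * (1 - p + p * Real.exp v) -
        p * Real.exp v * (p * Real.exp v)) / (1 - p + p * Real.exp v) ^ 2) v := by
    intro v
    have h1 : HasDerivAt (fun w : ℝ => p + w / 4) (1 / 4) v := by
      simpa using ((hasDerivAt_id v).div_const 4).const_add p
    have h2 : HasDerivAt (fun w => p * Real.exp w / (1 - p + p * Real.exp w))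
        ((p * Real.exp v * (1 - p + p * Real.exp v) -
          p * Real.exp v * (p * Real.exp v)) / (1 - p + p * Real.exp v) ^ 2) v := by
      exact ((Real.hasDerivAt_exp v).const_mul p).div (hDd v) (hD v).ne'
    exact h1.sub h2
  have hg1deriv_nonneg : ∀ v : ℝ, 0 ≤ 1 / 4 - (p * Real.exp v * (1 - p + p * Real.exp v) -
        p * Real.exp v * (p * Real.exp v)) / (1 - p + p * Real.exp v) ^ 2 := by
    intro v
    rw [sub_nonneg, div_le_iff₀ (pow_pos (hD v) 2)]
    nlinarith [sq_nonneg (1 - p - p * Real.exp v), Real.exp_pos v]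
  have hg1mono : Monotone g1 := by
    refine monotone_of_deriv_nonneg (fun v => (hg1 v).differentiableAt) (fun v => ?_)
    rw [(hg1 v).deriv]
    exact hg1deriv_nonneg v
  have hg10 : g1 0 = 0 := by simp [hg1def]
  set ψ : ℝ → ℝ := fun v => p * v + v ^ 2 / 8 - φ v with hψdef
  have hψ : ∀ v : ℝ, HasDerivAt ψ (g1 v) v := by
    intro v
    have h1 : HasDerivAt (fun w : ℝ => p * w + w ^ 2 / 8) (p + v / 4) v := by
      have : HasDerivAt (fun w : ℝ => w ^ 2) (2 * v) v := by
        simpa using hasDerivAt_pow 2 v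
      have := ((hasDerivAt_id v).const_mul p).add (this.div_const 8)
      refine (this.congr_deriv (by ring)).congr_of_eventuallyEq
        (Filter.Eventually.of_forall fun w => ?_)
      simp
    exact h1.sub (hφ v)
  have hψ0 : ψ 0 = 0 := by simp [hψdef, hφdef]
  have hψnonneg : ∀ v : ℝ, 0 ≤ ψ v := by
    intro v
    rcases le_total 0 v with h | h
    · have hm : MonotoneOn ψ (Set.Ici (0:ℝ)) := by
        refine monotoneOn_of_deriv_nonneg (convex_Ici 0)
          (Continuous.continuousOn (by
            fun_prop (disch := intro v; exact (hD v).ne')))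
          (fun w hw => (hψ w).differentiableAt.differentiableWithinAt) ?_
        intro w hw
        rw [(hψ w).deriv]
        rw [← hg10]
        exact hg1mono (le_of_lt (by simpa using hw))
      have := hm (Set.self_mem_Ici) (Set.mem_Ici.2 h) h
      rwa [hψ0] at this
    · have hm : AntitoneOn ψ (Set.Iic (0:ℝ)) := by
        refine antitoneOn_of_deriv_nonpos (convex_Iic 0)
          (Continuous.continuousOn (by
            fun_prop (disch := intro v; exact (hD v).ne')))
          (fun w hw => (hψ w).differentiableAt.differentiableWithinAt) ?_
        intro w hw
        rw [(hψ w).deriv]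
        rw [← hg10]
        exact hg1mono (le_of_lt (by simpa using hw))
      have := hm (Set.mem_Iic.2 h) (Set.self_mem_Iic) h
      rwa [hψ0] at this
  -- conclude
  have hlog : Real.log (1 - p + p * Real.exp u) ≤ p * u + u ^ 2 / 8 := by
    have := hψnonneg u
    simp only [hψdef, hφdef] at this
    linarith
  have hDle : 1 - p + p * Real.exp u ≤ Real.exp (p * u + u ^ 2 / 8) := by
    calc 1 - p + p * Real.exp u = Real.exp (Real.log (1 - p + p * Real.exp u)) :=
          (Real.exp_log (hD u)).symm
      _ ≤ _ := Real.exp_le_exp.2 hlog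
  have key : (1 - p) * Real.exp (-(u * p)) + p * Real.exp (u * (1 - p))
      = Real.exp (-(u * p)) * (1 - p + p * Real.exp u) := by
    rw [show u * (1 - p) = -(u * p) + u by ring, Real.exp_add]
    ring
  rw [key]
  calc Real.exp (-(u * p)) * (1 - p + p * Real.exp u)
      ≤ Real.exp (-(u * p)) * Real.exp (p * u + u ^ 2 / 8) := by
        exact mul_le_mul_of_nonneg_left hDle (Real.exp_pos _).le
    _ = Real.exp (u ^ 2 / 8) := by rw [← Real.exp_add]; ring_nf

lemma integrable_of_abs_le {Ω : Type*} {m0 : MeasurableSpace Ω} {μ : Measure Ω}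
    [IsFiniteMeasure μ] {f : Ω → ℝ} (hf : AEStronglyMeasurable f μ) {C : ℝ}
    (h : ∀ ω, |f ω| ≤ C) : Integrable f μ :=
  (integrable_const C).mono' hf (Filter.Eventually.of_forall (fun ω => by
    simpa [Real.norm_eq_abs] using h ω))

lemma mul_le_two_of_abs {a b : ℝ} (ha : |a| ≤ 2) (hb : |b| ≤ 1) : |a * b| ≤ 2 := by
  rw [abs_mul]
  nlinarith [abs_nonneg a, abs_nonneg b]


lemma condexp_exp_mul_le {Ω : Type*} {m0 : MeasurableSpace Ω} (μ : Measure Ω)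
    [IsProbabilityMeasure μ] {m : MeasurableSpace Ω} (hm : m ≤ m0)
    {U P e : Ω → ℝ} (hU : StronglyMeasurable[m] U) (hUb : ∀ ω, |U ω| ≤ 2)
    (hP : StronglyMeasurable[m] P) (hPb : ∀ ω, P ω ∈ Set.Icc (0:ℝ) 1)
    (he : Measurable[m0] e) (heb : ∀ ω, e ω ∈ Set.Icc (P ω - 1) (P ω))
    (hemean : μ[e | m] =ᵐ[μ] 0) :
    μ[fun ω => Real.exp (U ω * e ω) | m] ≤ᵐ[μ] fun ω => Real.exp (U ω ^ 2 / 8) := by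
  have hPb2 : ∀ ω, 0 ≤ P ω ∧ P ω ≤ 1 := fun ω => Set.mem_Icc.1 (hPb ω)
  have heb2 : ∀ ω, P ω - 1 ≤ e ω ∧ e ω ≤ P ω := fun ω => Set.mem_Icc.1 (heb ω)
  have hPb' : ∀ ω, |P ω| ≤ 1 := fun ω => by
    obtain ⟨h0, h1⟩ := hPb2 ω; rw [abs_le]; constructor <;> linarith
  have hPm1 : ∀ ω, |P ω - 1| ≤ 1 := fun ω => by
    obtain ⟨h0, h1⟩ := hPb2 ω; rw [abs_le]; constructor <;> linarith
  have heb' : ∀ ω, |e ω| ≤ 1 := fun ω => by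
    obtain ⟨h0, h1⟩ := hPb2 ω; obtain ⟨h2, h3⟩ := heb2 ω
    rw [abs_le]; constructor <;> linarith
  set A : Ω → ℝ := fun ω => Real.exp (U ω * (P ω - 1)) with hAdef
  set B : Ω → ℝ := fun ω => Real.exp (U ω * P ω) with hBdef
  set C : Ω → ℝ := fun ω => B ω - A ω with hCdef
  set G : Ω → ℝ := fun ω => A ω * P ω + B ω * (1 - P ω) with hGdef
  have hAb : ∀ ω, |A ω| ≤ Real.exp 2 := fun ω => by
    rw [abs_of_pos (Real.exp_pos _)]
    exact Real.exp_le_exp.2 (le_trans (le_abs_self _) (mul_le_two_of_abs (hUb ω) (hPm1 ω)))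
  have hBb : ∀ ω, |B ω| ≤ Real.exp 2 := fun ω => by
    rw [abs_of_pos (Real.exp_pos _)]
    exact Real.exp_le_exp.2 (le_trans (le_abs_self _) (mul_le_two_of_abs (hUb ω) (hPb' ω)))
  have hAm : StronglyMeasurable[m] A :=
    (Real.continuous_exp.comp_stronglyMeasurable (hU.mul (hP.sub stronglyMeasurable_const)))
  have hBm : StronglyMeasurable[m] B :=
    (Real.continuous_exp.comp_stronglyMeasurable (hU.mul hP))
  have hCm : StronglyMeasurable[m] C := hBm.sub hAm
  have hGm : StronglyMeasurable[m] G :=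
    (hAm.mul hP).add (hBm.mul (stronglyMeasurable_const.sub hP))
  have hCb : ∀ ω, |C ω| ≤ 2 * Real.exp 2 := fun ω => by
    calc |C ω| ≤ |B ω| + |A ω| := abs_sub _ _
      _ ≤ 2 * Real.exp 2 := by linarith [hAb ω, hBb ω]
  have hGb : ∀ ω, |G ω| ≤ 2 * Real.exp 2 := fun ω => by
    obtain ⟨h0, h1⟩ := hPb2 ω
    have h1P : |1 - P ω| ≤ 1 := abs_le.2 ⟨by linarith, by linarith⟩
    calc |G ω| ≤ |A ω * P ω| + |B ω * (1 - P ω)| := abs_add_le _ _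
      _ = |A ω| * |P ω| + |B ω| * |1 - P ω| := by rw [abs_mul, abs_mul]
      _ ≤ Real.exp 2 * 1 + Real.exp 2 * 1 := by
          have := abs_nonneg (A ω); have := abs_nonneg (B ω)
          have := abs_nonneg (P ω); have := abs_nonneg (1 - P ω)
          have := hAb ω; have := hBb ω; have h5 := hPb' ω
          nlinarith [hAb ω, hBb ω]
      _ = 2 * Real.exp 2 := by ring
  -- integrability facts
  have hei : Integrable e μ := integrable_of_abs_le (μ := μ) (he.aestronglyMeasurable (μ := μ)) heb'
  have hCE : Integrable (C * e) μ := by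
    refine integrable_of_abs_le (((hCm.mono hm).mul he.stronglyMeasurable).aestronglyMeasurable)
      (C := 2 * Real.exp 2) (fun ω => ?_)
    calc |(C * e) ω| = |C ω| * |e ω| := abs_mul _ _
      _ ≤ (2 * Real.exp 2) * 1 := by
          exact mul_le_mul (hCb ω) (heb' ω) (abs_nonneg _) (by positivity)
      _ = 2 * Real.exp 2 := by ring
  have hGi : Integrable G μ := integrable_of_abs_le ((hGm.mono hm).aestronglyMeasurable) hGb
  have hexpi : Integrable (fun ω => Real.exp (U ω * e ω)) μ := by
    refine integrable_of_abs_le (C := Real.exp 2) ?_ (fun ω => ?_)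
    · exact (Real.continuous_exp.comp_stronglyMeasurable
        ((hU.mono hm).mul he.stronglyMeasurable)).aestronglyMeasurable
    · rw [abs_of_pos (Real.exp_pos _)]
      exact Real.exp_le_exp.2 (le_trans (le_abs_self _) (mul_le_two_of_abs (hUb ω) (heb' ω)))
  -- pointwise convexity bound
  have hpt : ∀ ω, Real.exp (U ω * e ω) ≤ C ω * e ω + G ω := by
    intro ω
    set t : ℝ := e ω - (P ω - 1) with htdef
    have ht0 : 0 ≤ t := by have := (heb2 ω).1; simp only [htdef]; linarith
    have ht1 : t ≤ 1 := by have := (heb2 ω).2; simp only [htdef]; linarith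
    have hconv := convexOn_exp.2 (Set.mem_univ (U ω * (P ω - 1))) (Set.mem_univ (U ω * P ω))
      (by linarith : (0:ℝ) ≤ 1 - t) ht0 (by ring)
    have harg : (1 - t) • (U ω * (P ω - 1)) + t • (U ω * P ω) = U ω * e ω := by
      simp only [smul_eq_mul, htdef]; ring
    rw [harg] at hconv
    calc Real.exp (U ω * e ω) ≤ (1 - t) • A ω + t • B ω := hconv
      _ = C ω * e ω + G ω := by simp only [smul_eq_mul, hCdef, hGdef, htdef]; ring
  -- conditional expectation computation
  have hcond : μ[fun ω => C ω * e ω + G ω | m] =ᵐ[μ] fun ω => C ω * (μ[e|m]) ω + G ω := by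
    have h1 : μ[fun ω => C ω * e ω + G ω | m] =ᵐ[μ] μ[C * e | m] + μ[G | m] :=
      condExp_add hCE hGi _
    have h2 : μ[C * e | m] =ᵐ[μ] C * μ[e | m] := condExp_mul_of_stronglyMeasurable_left hCm hCE hei
    have h3 : μ[G | m] = G := condExp_of_stronglyMeasurable hm hGm hGi
    filter_upwards [h1, h2] with ω hω1 hω2
    simp only [Pi.add_apply, Pi.mul_apply] at *
    rw [hω1, hω2, h3]
  have hfinal : ∀ ω, G ω ≤ Real.exp (U ω ^ 2 / 8) := by
    intro ω
    have := hoeffding_scalar (p := 1 - P ω) (by linarith [(hPb ω).2]) (by linarith [(hPb ω).1])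
      (U ω)
    calc G ω = (1 - (1 - P ω)) * Real.exp (-(U ω * (1 - P ω)))
        + (1 - P ω) * Real.exp (U ω * (1 - (1 - P ω))) := by
          simp only [hGdef, hAdef, hBdef]
          ring_nf
      _ ≤ Real.exp (U ω ^ 2 / 8) := this
  calc μ[fun ω => Real.exp (U ω * e ω) | m]
      ≤ᵐ[μ] μ[fun ω => C ω * e ω + G ω | m] := by
        exact condExp_mono hexpi (hCE.add hGi) (Filter.Eventually.of_forall hpt)
    _ =ᵐ[μ] fun ω => C ω * (μ[e|m]) ω + G ω := hcond
    _ =ᵐ[μ] fun ω => G ω := by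
        filter_upwards [hemean] with ω hω
        simp [hω]
    _ ≤ᵐ[μ] fun ω => Real.exp (U ω ^ 2 / 8) := Filter.Eventually.of_forall hfinal

lemma ville_finite {Ω : Type*} {m0 : MeasurableSpace Ω} {μ : Measure Ω}
    [IsProbabilityMeasure μ] {ℱ : Filtration ℕ m0}
    {W : ℕ → Ω → ℝ} (hW : Supermartingale W ℱ μ) (hnn : ∀ n ω, 0 ≤ W n ω)
    {c : ℝ} (hc : 0 < c) (n : ℕ) :
    μ {ω | ∃ k ≤ n, c ≤ W k ω} ≤ ENNReal.ofReal ((∫ ω, W 0 ω ∂μ) / c) := by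
  set τ : Ω → WithTop ℕ := fun ω => ((hittingBtwn W (Set.Ici c) 0 n ω : ℕ) : WithTop ℕ) with hτdef
  have hτ : IsStoppingTime ℱ τ :=
    Adapted.isStoppingTime_hittingBtwn hW.stronglyAdapted.adapted measurableSet_Ici
  have hτle : ∀ ω, τ ω ≤ n := fun ω => WithTop.coe_le_coe.2 (hittingBtwn_le ω)
  set E : Set Ω := {ω | ∃ k ≤ n, c ≤ W k ω} with hEdef
  have hEmeas : MeasurableSet E := by
    have : E = ⋃ k ∈ Finset.range (n + 1), {ω | c ≤ W k ω} := by
      ext ω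
      simp only [hEdef, Set.mem_setOf_eq, Set.mem_iUnion, Finset.mem_range, Nat.lt_succ_iff,
        exists_prop]
    rw [this]
    refine MeasurableSet.biUnion (Finset.range (n+1)).countable_toSet (fun k _ => ?_)
    exact measurableSet_le measurable_const
      ((hW.stronglyAdapted k).measurable.le (ℱ.le k))
  have hSV : ∀ ω ∈ E, c ≤ stoppedValue W τ ω := by
    intro ω hω
    obtain ⟨k, hk, hck⟩ := hω
    refine stoppedValue_hittingBtwn_mem ?_
    exact ⟨k, ⟨Nat.zero_le _, hk⟩, hck⟩
  have hint : Integrable (stoppedValue W τ) μ :=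
    integrable_stoppedValue ℕ hτ hW.integrable hτle
  have hexp : ∫ ω, stoppedValue W τ ω ∂μ ≤ ∫ ω, W 0 ω ∂μ := by
    have hsub := hW.neg
    have h0 : IsStoppingTime ℱ (fun _ : Ω => ((0 : ℕ) : WithTop ℕ)) := isStoppingTime_const _ 0
    have := hsub.expected_stoppedValue_mono h0 hτ (fun ω => WithTop.coe_le_coe.2 (Nat.zero_le _)) hτle
    change ∫ x, (-W) 0 x ∂μ ≤ _ at this
    have hneg : ∀ ω, stoppedValue (-W) τ ω = -stoppedValue W τ ω := fun ω => rfl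
    have h1 : ∫ x, stoppedValue (-W) τ x ∂μ = -∫ x, stoppedValue W τ x ∂μ := by
      simp only [hneg]; exact integral_neg _
    have h2 : ∫ x, (-W) 0 x ∂μ = -∫ x, W 0 x ∂μ := by
      simp only [Pi.neg_apply]; exact integral_neg _
    rw [h1, h2] at this
    linarith
  have hmain : c * (μ E).toReal ≤ ∫ ω, W 0 ω ∂μ := by
    calc c * (μ E).toReal ≤ ∫ ω in E, stoppedValue W τ ω ∂μ :=
          by have := setIntegral_ge_of_const_le hEmeas (measure_ne_top μ E) hSV hint.integrableOn
             rwa [smul_eq_mul, mul_comm] at this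
      _ ≤ ∫ ω, stoppedValue W τ ω ∂μ :=
          setIntegral_le_integral hint (Eventually.of_forall (fun ω => hnn _ ω))
      _ ≤ _ := hexp
  have : (μ E).toReal ≤ (∫ ω, W 0 ω ∂μ) / c := by
    rw [le_div_iff₀ hc]; linarith
  calc μ E = ENNReal.ofReal ((μ E).toReal) := (ENNReal.ofReal_toReal (measure_ne_top μ E)).symm
    _ ≤ _ := ENNReal.ofReal_le_ofReal this




lemma zb_aux {a b : ℝ} (ha : |a| ≤ 2) (hb : |b| ≤ 1) : |a * b - a ^ 2 / 8| ≤ 3 := by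
  obtain ⟨ha1, ha2⟩ := abs_le.1 ha
  obtain ⟨hb1, hb2⟩ := abs_le.1 hb
  have hsq : a ^ 2 ≤ 4 := by nlinarith
  have hab1 : -2 ≤ a * b := by nlinarith
  have hab2 : a * b ≤ 2 := by nlinarith
  rw [abs_le]
  constructor <;> [linarith [sq_nonneg a]; linarith [sq_nonneg a]]

lemma key_one {Ω X : Type*} {m0 : MeasurableSpace Ω} [MeasurableSpace X]
    (μ : Measure Ω) [IsProbabilityMeasure μ] (ℱ : Filtration ℕ m0)
    (x : ℕ → Ω → X) (y Q : ℕ → Ω → ℝ)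
    (fstar : X → ℝ) (hstarm : Measurable fstar)
    (hstarb : ∀ z, fstar z ∈ Set.Icc (0 : ℝ) 1)
    (hx : ∀ t, Measurable[ℱ (t - 1)] (x t))
    (hQmeas : ∀ t, Measurable[ℱ (t - 1)] (Q t))
    (hQv : ∀ t ω, Q t ω = 0 ∨ Q t ω = 1)
    (hy : ∀ t, Measurable[ℱ t] (y t)) (hyb : ∀ t ω, y t ω ∈ Set.Icc (0 : ℝ) 1)
    (hrealizable : ∀ t, μ[y t | ℱ (t - 1)] =ᵐ[μ] fun ω => fstar (x t ω))
    (f : X → ℝ) (hfm : Measurable f) (hfb : ∀ z, f z ∈ Set.Icc (0:ℝ) 1)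
    (s : ℝ) (hs : s = 1 ∨ s = -1) {c : ℝ} (hc : 0 < c) :
    μ {ω | ∃ τ : ℕ, Real.log c ≤ ∑ t ∈ Finset.Icc 1 τ,
        (2 * s * (Q t ω * (f (x t ω) - fstar (x t ω))) * (fstar (x t ω) - y t ω)
          - (2 * s * (Q t ω * (f (x t ω) - fstar (x t ω)))) ^ 2 / 8)}
      ≤ ENNReal.ofReal (1 / c) := by
  set U : ℕ → Ω → ℝ := fun t ω => 2 * s * (Q t ω * (f (x t ω) - fstar (x t ω))) with hUdef
  set e : ℕ → Ω → ℝ := fun t ω => fstar (x t ω) - y t ω with hedef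
  set Z : ℕ → Ω → ℝ := fun t ω => U t ω * e t ω - U t ω ^ 2 / 8 with hZdef
  set W : ℕ → Ω → ℝ := fun n ω => Real.exp (∑ t ∈ Finset.Icc 1 n, Z t ω) with hWdef
  have hs' : |s| = 1 := by rcases hs with h | h <;> simp [h]
  have hQb : ∀ t ω, |Q t ω| ≤ 1 := fun t ω => by
    rcases hQv t ω with h | h <;> simp [h]
  have hdb : ∀ t ω, |f (x t ω) - fstar (x t ω)| ≤ 1 := fun t ω => by
    have h1 := hfb (x t ω); have h2 := hstarb (x t ω)
    simp only [Set.mem_Icc] at h1 h2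
    rw [abs_le]; constructor <;> [linarith; linarith]
  have hUb : ∀ t ω, |U t ω| ≤ 2 := fun t ω => by
    have h1 := hQb t ω; have h2 := hdb t ω
    have h0 : |U t ω| = 2 * (|s| * (|Q t ω| * |f (x t ω) - fstar (x t ω)|)) := by
      simp only [hUdef]
      rw [abs_mul, abs_mul, abs_mul]
      simp [abs_of_nonneg, mul_assoc]
    rw [h0, hs']
    nlinarith [abs_nonneg (Q t ω), abs_nonneg (f (x t ω) - fstar (x t ω))]
  have heb : ∀ t ω, |e t ω| ≤ 1 := fun t ω => by
    have h1 := hstarb (x t ω); have h2 := hyb t ω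
    simp only [Set.mem_Icc] at h1 h2
    simp only [hedef]
    rw [abs_le]; constructor <;> [linarith; linarith]
  have hZb : ∀ t ω, |Z t ω| ≤ 3 := fun t ω => zb_aux (hUb t ω) (heb t ω)
  -- measurability
  have hUm : ∀ t, Measurable[ℱ (t - 1)] (U t) := fun t =>
    (((hQmeas t).mul ((hfm.comp (hx t)).sub (hstarm.comp (hx t)))).const_mul (2 * s))
  have hZm : ∀ n t, t ≤ n → Measurable[ℱ n] (Z t) := by
    intro n t ht
    have h1 : Measurable[ℱ n] (U t) := (hUm t).mono (ℱ.mono (by omega)) le_rfl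
    have h2 : Measurable[ℱ n] (e t) := by
      have hx' : Measurable[ℱ n] fun ω => fstar (x t ω) :=
        (hstarm.comp (hx t)).mono (ℱ.mono (by omega)) le_rfl
      exact hx'.sub ((hy t).mono (ℱ.mono ht) le_rfl)
    exact (h1.mul h2).sub ((h1.pow_const 2).div_const 8)
  have hWm : ∀ n, Measurable[ℱ n] (W n) := by
    intro n
    refine Real.measurable_exp.comp (Finset.measurable_sum _ (fun t ht => ?_))
    exact hZm n t (Finset.mem_Icc.1 ht).2
  have hWadapted : StronglyAdapted ℱ W := fun n => (hWm n).stronglyMeasurable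
  have hWpos : ∀ n ω, 0 < W n ω := fun n ω => Real.exp_pos _
  have hWb : ∀ n ω, |W n ω| ≤ Real.exp (3 * n) := by
    intro n ω
    rw [abs_of_pos (hWpos n ω)]
    apply Real.exp_le_exp.2
    calc ∑ t ∈ Finset.Icc 1 n, Z t ω ≤ ∑ t ∈ Finset.Icc 1 n, (3:ℝ) := by
          exact Finset.sum_le_sum (fun t _ => le_trans (le_abs_self _) (hZb t ω))
      _ ≤ 3 * n := by
          have hcard : (Finset.Icc 1 n).card = n := by
            rw [Nat.card_Icc]; omega
          rw [Finset.sum_const, hcard, nsmul_eq_mul]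
          linarith
  have hWint : ∀ n, Integrable (W n) μ := fun n =>
    integrable_of_abs_le ((hWm n).mono (ℱ.le n) le_rfl).aestronglyMeasurable (hWb n)
  -- supermartingale step
  have hstep : ∀ n, μ[W (n + 1) | ℱ n] ≤ᵐ[μ] W n := by
    intro n
    have hn1 : (n + 1 : ℕ) - 1 = n := by omega
    set G : Ω → ℝ := fun ω => W n ω * Real.exp (-(U (n+1) ω ^ 2) / 8) with hGdef
    set H : Ω → ℝ := fun ω => Real.exp (U (n+1) ω * e (n+1) ω) with hHdef
    have hU1m : Measurable[ℱ n] (U (n+1)) := by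
      have := hUm (n+1); rwa [hn1] at this
    have hGm : StronglyMeasurable[ℱ n] G :=
      ((hWm n).mul (Real.measurable_exp.comp
        (((hU1m.pow_const 2).neg).div_const 8))).stronglyMeasurable
    have hGb : ∀ ω, |G ω| ≤ Real.exp (3 * n) := fun ω => by
      rw [abs_of_pos (by positivity)]
      calc W n ω * Real.exp (-(U (n+1) ω ^ 2) / 8) ≤ W n ω * 1 := by
            refine mul_le_mul_of_nonneg_left ?_ (hWpos n ω).le
            rw [← Real.exp_zero]
            apply Real.exp_le_exp.2
            nlinarith [sq_nonneg (U (n+1) ω)]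
        _ = W n ω := mul_one _
        _ ≤ Real.exp (3 * n) := le_trans (le_abs_self _) (hWb n ω)
    have hHb : ∀ ω, |H ω| ≤ Real.exp 2 := fun ω => by
      rw [abs_of_pos (Real.exp_pos _)]
      apply Real.exp_le_exp.2
      have h1 := hUb (n+1) ω; have h2 := heb (n+1) ω
      calc U (n+1) ω * e (n+1) ω ≤ |U (n+1) ω * e (n+1) ω| := le_abs_self _
        _ = |U (n+1) ω| * |e (n+1) ω| := abs_mul _ _
        _ ≤ 2 := by nlinarith [abs_nonneg (U (n+1) ω), abs_nonneg (e (n+1) ω)]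
    have hHmeas : Measurable[m0] H := by
      refine Real.measurable_exp.comp (Measurable.mul ?_ ?_)
      · exact (hU1m.mono (ℱ.le n) le_rfl)
      · exact ((hstarm.comp ((hx (n+1)).mono (ℱ.le _) le_rfl)).sub
          ((hy (n+1)).mono (ℱ.le _) le_rfl))
    have hHint : Integrable H μ :=
      integrable_of_abs_le hHmeas.aestronglyMeasurable hHb
    have hGH : Integrable (G * H) μ := by
      refine integrable_of_abs_le (C := Real.exp (3*n) * Real.exp 2) ?_ (fun ω => ?_)
      · exact (((hGm.mono (ℱ.le n)).measurable.mul hHmeas)).aestronglyMeasurable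
      · rw [Pi.mul_apply, abs_mul]
        exact mul_le_mul (hGb ω) (hHb ω) (abs_nonneg _) (Real.exp_pos _).le
    have hWeq : W (n+1) = G * H := by
      funext ω
      simp only [hWdef, hGdef, hHdef, Pi.mul_apply]
      rw [← Real.exp_add, ← Real.exp_add]
      congr 1
      rw [Finset.sum_Icc_succ_top (by omega : 1 ≤ n + 1)]
      simp only [hZdef]
      ring
    -- conditional mean zero of e (n+1)
    have hestarm : Measurable[ℱ n] (fun ω => fstar (x (n+1) ω)) := by
      have := hstarm.comp (hx (n+1)); rwa [hn1] at this
    have hstari : Integrable (fun ω => fstar (x (n+1) ω)) μ := by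
      refine integrable_of_abs_le (C := 1)
        ((hestarm.mono (ℱ.le n) le_rfl)).aestronglyMeasurable (fun ω => ?_)
      have := hstarb (x (n+1) ω); simp only [Set.mem_Icc] at this
      rw [abs_le]; constructor <;> linarith [this.1, this.2]
    have hyint : Integrable (y (n+1)) μ := by
      refine integrable_of_abs_le (C := 1)
        (((hy (n+1)).mono (ℱ.le _) le_rfl)).aestronglyMeasurable (fun ω => ?_)
      have := hyb (n+1) ω; simp only [Set.mem_Icc] at this
      rw [abs_le]; constructor <;> linarith [this.1, this.2]
    have hemean : μ[e (n+1) | ℱ n] =ᵐ[μ] 0 := by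
      have heq : e (n+1) = (fun ω => fstar (x (n+1) ω)) - y (n+1) := rfl
      rw [heq]
      calc μ[(fun ω => fstar (x (n+1) ω)) - y (n+1) | ℱ n]
          =ᵐ[μ] μ[fun ω => fstar (x (n+1) ω) | ℱ n] - μ[y (n+1) | ℱ n] :=
            condExp_sub hstari hyint _
        _ =ᵐ[μ] 0 := by
            have h1 : μ[fun ω => fstar (x (n+1) ω) | ℱ n] = fun ω => fstar (x (n+1) ω) :=
              condExp_of_stronglyMeasurable (ℱ.le n) hestarm.stronglyMeasurable hstari
            have h2 : μ[y (n+1) | ℱ n] =ᵐ[μ] fun ω => fstar (x (n+1) ω) := by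
              have := hrealizable (n+1); rwa [hn1] at this
            filter_upwards [h2] with ω hω
            simp [h1, hω]
    have hcondH : μ[H | ℱ n] ≤ᵐ[μ] fun ω => Real.exp (U (n+1) ω ^ 2 / 8) := by
      refine condexp_exp_mul_le μ (ℱ.le n) hU1m.stronglyMeasurable (hUb (n+1))
        hestarm.stronglyMeasurable (fun ω => hstarb (x (n+1) ω)) ?_ (fun ω => ?_) hemean
      · exact ((hstarm.comp ((hx (n+1)).mono (ℱ.le _) le_rfl)).sub
          ((hy (n+1)).mono (ℱ.le _) le_rfl))
      · have := hyb (n+1) ω; simp only [Set.mem_Icc] at this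
        simp only [hedef, Set.mem_Icc]
        constructor <;> [linarith [this.2]; linarith [this.1]]
    calc μ[W (n+1) | ℱ n] =ᵐ[μ] μ[G * H | ℱ n] := by rw [hWeq]
      _ =ᵐ[μ] G * μ[H | ℱ n] := condExp_mul_of_stronglyMeasurable_left hGm (hWeq ▸ hWint (n+1)) hHint
      _ ≤ᵐ[μ] W n := by
          filter_upwards [hcondH] with ω hω
          have hG0 : 0 ≤ G ω := by positivity
          calc (G * μ[H | ℱ n]) ω = G ω * (μ[H | ℱ n]) ω := rfl
            _ ≤ G ω * Real.exp (U (n+1) ω ^ 2 / 8) := mul_le_mul_of_nonneg_left hω hG0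
            _ = W n ω := by
                simp only [hGdef]
                rw [mul_assoc, ← Real.exp_add]
                have : -U (n+1) ω ^ 2 / 8 + U (n+1) ω ^ 2 / 8 = 0 := by ring
                rw [this, Real.exp_zero, mul_one]
  have hsuper : Supermartingale W ℱ μ := supermartingale_nat hWadapted hWint hstep
  -- W 0 = 1
  have hW0 : ∀ ω, W 0 ω = 1 := fun ω => by
    simp [hWdef]
  have hintW0 : ∫ ω, W 0 ω ∂μ = 1 := by
    simp only [hW0]
    simp
  -- event inclusion
  have hsub : {ω | ∃ τ : ℕ, Real.log c ≤ ∑ t ∈ Finset.Icc 1 τ,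
        (2 * s * (Q t ω * (f (x t ω) - fstar (x t ω))) * (fstar (x t ω) - y t ω)
          - (2 * s * (Q t ω * (f (x t ω) - fstar (x t ω)))) ^ 2 / 8)}
      ⊆ ⋃ n : ℕ, {ω | ∃ k ≤ n, c ≤ W k ω} := by
    intro ω hω
    obtain ⟨τ, hτ⟩ := hω
    refine Set.mem_iUnion.2 ⟨τ, τ, le_rfl, ?_⟩
    have : c = Real.exp (Real.log c) := (Real.exp_log hc).symm
    rw [this]
    exact Real.exp_le_exp.2 hτ
  refine le_trans (measure_mono hsub) ?_
  have hmono : Monotone (fun n => {ω | ∃ k ≤ n, c ≤ W k ω}) := by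
    intro a b hab ω hω
    obtain ⟨k, hk, hck⟩ := hω
    exact ⟨k, le_trans hk hab, hck⟩
  rw [hmono.measure_iUnion]
  refine iSup_le (fun n => ?_)
  have := ville_finite hsuper (fun n ω => (hWpos n ω).le) hc n
  rwa [hintW0] at this



def badSet {Ω X : Type*} (x : ℕ → Ω → X) (y Q : ℕ → Ω → ℝ) (fstar f : X → ℝ)
    (s c : ℝ) : Set Ω :=
  {ω | ∃ τ : ℕ, Real.log c ≤ ∑ t ∈ Finset.Icc 1 τ,
    (2 * s * (Q t ω * (f (x t ω) - fstar (x t ω))) * (fstar (x t ω) - y t ω)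
      - (2 * s * (Q t ω * (f (x t ω) - fstar (x t ω)))) ^ 2 / 8)}

lemma mem_badSet {Ω X : Type*} {x : ℕ → Ω → X} {y Q : ℕ → Ω → ℝ} {fstar f : X → ℝ}
    {s c : ℝ} {ω : Ω} : ω ∈ badSet x y Q fstar f s c ↔ ∃ τ : ℕ,
    Real.log c ≤ ∑ t ∈ Finset.Icc 1 τ,
    (2 * s * (Q t ω * (f (x t ω) - fstar (x t ω))) * (fstar (x t ω) - y t ω)
      - (2 * s * (Q t ω * (f (x t ω) - fstar (x t ω)))) ^ 2 / 8) := Iff.rfl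

set_option maxHeartbeats 1000000 in
theorem stmt_12 {Ω X : Type*} {m0 : MeasurableSpace Ω} [MeasurableSpace X]
    (μ : Measure Ω) [IsProbabilityMeasure μ]
    (ℱ : Filtration ℕ m0)
    (x : ℕ → Ω → X) (y Q : ℕ → Ω → ℝ)
    (fstar : X → ℝ) (hstarm : Measurable fstar)
    (hstarb : ∀ z, fstar z ∈ Set.Icc (0 : ℝ) 1)
    (F : Finset (X → ℝ)) (hFm : ∀ f ∈ F, Measurable f)
    (hFb : ∀ f ∈ F, ∀ z, f z ∈ Set.Icc (0 : ℝ) 1)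
    (hx : ∀ t, Measurable[ℱ (t - 1)] (x t))
    (hQmeas : ∀ t, Measurable[ℱ (t - 1)] (Q t))
    (hQv : ∀ t ω, Q t ω = 0 ∨ Q t ω = 1)
    (hy : ∀ t, Measurable[ℱ t] (y t)) (hyb : ∀ t ω, y t ω ∈ Set.Icc (0 : ℝ) 1)
    (hrealizable : ∀ t, μ[y t | ℱ (t - 1)] =ᵐ[μ] fun ω => fstar (x t ω))
    (δ : ℝ) (hδ : δ ∈ Set.Ioo (0 : ℝ) 1) :
    ENNReal.ofReal (1 - δ) ≤
      μ {ω | ∀ f ∈ F, ∀ τ : ℕ,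
        ((∑ t ∈ Finset.Icc 1 τ,
            Q t ω * ((f (x t ω) - y t ω) ^ 2 - (fstar (x t ω) - y t ω) ^ 2))
          ≤ (3 / 2) * (∑ t ∈ Finset.Icc 1 τ, Q t ω * (f (x t ω) - fstar (x t ω)) ^ 2)
            + Real.log (2 * (F.card : ℝ) / δ))
        ∧ ((∑ t ∈ Finset.Icc 1 τ, Q t ω * (f (x t ω) - fstar (x t ω)) ^ 2)
          ≤ 2 * (∑ t ∈ Finset.Icc 1 τ,
              Q t ω * ((f (x t ω) - y t ω) ^ 2 - (fstar (x t ω) - y t ω) ^ 2))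
            + 2 * Real.log (2 * (F.card : ℝ) / δ))} := by
  obtain ⟨hδ0, hδ1⟩ := hδ
  rcases Finset.eq_empty_or_nonempty F with hF | hFne
  · subst hF
    have hT : {ω : Ω | ∀ f ∈ (∅ : Finset (X → ℝ)), ∀ τ : ℕ, True ∧ True} = Set.univ := by
      ext ω; simp
    have hT' : ENNReal.ofReal (1 - δ) ≤ μ Set.univ := by
      rw [measure_univ]
      exact ENNReal.ofReal_le_one.2 (by linarith)
    refine le_trans hT' (le_of_eq ?_)
    congr 1
    ext ω
    simp [Finset.notMem_empty]
  · set c : ℝ := 2 * (F.card : ℝ) / δ with hcdef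
    have hcard1 : (1:ℝ) ≤ (F.card : ℝ) := by exact_mod_cast hFne.card_pos
    have hc0 : 0 < c := by rw [hcdef]; positivity
    -- bad events
    have hBadmeas : ∀ f ∈ F, ∀ s : ℝ, MeasurableSet (badSet x y Q fstar f s c) := by
      intro f hf s
      have hg : ∀ τ : ℕ, Measurable (fun ω => ∑ t ∈ Finset.Icc 1 τ,
          (2 * s * (Q t ω * (f (x t ω) - fstar (x t ω))) * (fstar (x t ω) - y t ω)
            - (2 * s * (Q t ω * (f (x t ω) - fstar (x t ω)))) ^ 2 / 8)) := by
        intro τ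
        refine Finset.measurable_sum _ (fun t _ => ?_)
        have hQ' : Measurable (Q t) := (hQmeas t).mono (ℱ.le _) le_rfl
        have hx' : Measurable (x t) := (hx t).mono (ℱ.le _) le_rfl
        have hy' : Measurable (y t) := (hy t).mono (ℱ.le _) le_rfl
        have h1 : Measurable (fun ω => 2 * s * (Q t ω * (f (x t ω) - fstar (x t ω)))) :=
          ((hQ'.mul (((hFm f hf).comp hx').sub (hstarm.comp hx'))).const_mul (2 * s))
        exact ((h1.mul ((hstarm.comp hx').sub hy')).sub ((h1.pow_const 2).div_const 8))
      have : badSet x y Q fstar f s c = ⋃ τ : ℕ, {ω | Real.log c ≤ ∑ t ∈ Finset.Icc 1 τ,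
          (2 * s * (Q t ω * (f (x t ω) - fstar (x t ω))) * (fstar (x t ω) - y t ω)
            - (2 * s * (Q t ω * (f (x t ω) - fstar (x t ω)))) ^ 2 / 8)} := by
        ext ω; simp only [mem_badSet, Set.mem_iUnion, Set.mem_setOf_eq]
      rw [this]
      exact MeasurableSet.iUnion (fun τ => measurableSet_le measurable_const (hg τ))
    set B : Set Ω := ⋃ f ∈ F, (badSet x y Q fstar f 1 c ∪ badSet x y Q fstar f (-1) c) with hBdef
    have hBmeas : MeasurableSet B :=
      MeasurableSet.biUnion F.countable_toSet
        (fun f hf => ((hBadmeas f hf 1).union (hBadmeas f hf (-1))))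
    -- measure of B
    have hBadle : ∀ f ∈ F, ∀ s : ℝ, s = 1 ∨ s = -1 → μ (badSet x y Q fstar f s c) ≤ ENNReal.ofReal (1 / c) :=
      fun f hf s hs => key_one μ ℱ x y Q fstar hstarm hstarb hx hQmeas hQv hy hyb
        hrealizable f (hFm f hf) (hFb f hf) s hs hc0
    have hBle : μ B ≤ ENNReal.ofReal δ := by
      have h0 : μ B ≤ ∑ f ∈ F, μ (badSet x y Q fstar f 1 c ∪ badSet x y Q fstar f (-1) c) :=
        measure_biUnion_finset_le F (fun f => badSet x y Q fstar f 1 c ∪ badSet x y Q fstar f (-1) c)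
      calc μ B ≤ ∑ f ∈ F, μ (badSet x y Q fstar f 1 c ∪ badSet x y Q fstar f (-1) c) := h0
        _ ≤ ∑ f ∈ F, ENNReal.ofReal (2 / c) := by
            refine Finset.sum_le_sum (fun f hf => ?_)
            calc μ (badSet x y Q fstar f 1 c ∪ badSet x y Q fstar f (-1) c) ≤ μ (badSet x y Q fstar f 1 c) + μ (badSet x y Q fstar f (-1) c) := measure_union_le _ _
              _ ≤ ENNReal.ofReal (1 / c) + ENNReal.ofReal (1 / c) :=
                  add_le_add (hBadle f hf 1 (Or.inl rfl)) (hBadle f hf (-1) (Or.inr rfl))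
              _ = ENNReal.ofReal (2 / c) := by
                  rw [← ENNReal.ofReal_add (by positivity) (by positivity)]
                  ring_nf
        _ = (F.card : ENNReal) * ENNReal.ofReal (2 / c) := by
            rw [Finset.sum_const, nsmul_eq_mul]
        _ = ENNReal.ofReal ((F.card : ℝ) * (2 / c)) := by
            rw [ENNReal.ofReal_mul (by positivity)]
            congr 1
            exact (ENNReal.ofReal_natCast _).symm
        _ = ENNReal.ofReal δ := by
            congr 1
            rw [hcdef]
            field_simp
    -- inclusion
    have hsub : Bᶜ ⊆ {ω | ∀ f ∈ F, ∀ τ : ℕ,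
        ((∑ t ∈ Finset.Icc 1 τ,
            Q t ω * ((f (x t ω) - y t ω) ^ 2 - (fstar (x t ω) - y t ω) ^ 2))
          ≤ (3 / 2) * (∑ t ∈ Finset.Icc 1 τ, Q t ω * (f (x t ω) - fstar (x t ω)) ^ 2)
            + Real.log (2 * (F.card : ℝ) / δ))
        ∧ ((∑ t ∈ Finset.Icc 1 τ, Q t ω * (f (x t ω) - fstar (x t ω)) ^ 2)
          ≤ 2 * (∑ t ∈ Finset.Icc 1 τ,
              Q t ω * ((f (x t ω) - y t ω) ^ 2 - (fstar (x t ω) - y t ω) ^ 2))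
            + 2 * Real.log (2 * (F.card : ℝ) / δ))} := by
      intro ω hω
      simp only [hBdef, Set.mem_compl_iff, Set.mem_iUnion, Set.mem_union, not_exists, not_or]
        at hω
      intro f hf τ
      have hω' := hω f hf
      have h1 : ¬ (Real.log c ≤ ∑ t ∈ Finset.Icc 1 τ,
          (2 * (1:ℝ) * (Q t ω * (f (x t ω) - fstar (x t ω))) * (fstar (x t ω) - y t ω)
            - (2 * (1:ℝ) * (Q t ω * (f (x t ω) - fstar (x t ω)))) ^ 2 / 8)) := by
        have := hω'.1
        rw [mem_badSet, not_exists] at this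
        exact this τ
      have h2 : ¬ (Real.log c ≤ ∑ t ∈ Finset.Icc 1 τ,
          (2 * (-1:ℝ) * (Q t ω * (f (x t ω) - fstar (x t ω))) * (fstar (x t ω) - y t ω)
            - (2 * (-1:ℝ) * (Q t ω * (f (x t ω) - fstar (x t ω)))) ^ 2 / 8)) := by
        have := hω'.2
        rw [mem_badSet, not_exists] at this
        exact this τ
      rw [not_le] at h1 h2
      have hsum1 : (∑ t ∈ Finset.Icc 1 τ,
          (2 * (1:ℝ) * (Q t ω * (f (x t ω) - fstar (x t ω))) * (fstar (x t ω) - y t ω)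
            - (2 * (1:ℝ) * (Q t ω * (f (x t ω) - fstar (x t ω)))) ^ 2 / 8))
          = (∑ t ∈ Finset.Icc 1 τ,
            Q t ω * ((f (x t ω) - y t ω) ^ 2 - (fstar (x t ω) - y t ω) ^ 2))
          - (3/2) * (∑ t ∈ Finset.Icc 1 τ, Q t ω * (f (x t ω) - fstar (x t ω)) ^ 2) := by
        rw [Finset.mul_sum, ← Finset.sum_sub_distrib]
        refine Finset.sum_congr rfl (fun t _ => ?_)
        rcases hQv t ω with h | h <;> rw [h] <;> ring
      have hsum2 : (∑ t ∈ Finset.Icc 1 τ,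
          (2 * (-1:ℝ) * (Q t ω * (f (x t ω) - fstar (x t ω))) * (fstar (x t ω) - y t ω)
            - (2 * (-1:ℝ) * (Q t ω * (f (x t ω) - fstar (x t ω)))) ^ 2 / 8))
          = (1/2) * (∑ t ∈ Finset.Icc 1 τ, Q t ω * (f (x t ω) - fstar (x t ω)) ^ 2)
          - (∑ t ∈ Finset.Icc 1 τ,
            Q t ω * ((f (x t ω) - y t ω) ^ 2 - (fstar (x t ω) - y t ω) ^ 2)) := by
        rw [Finset.mul_sum, ← Finset.sum_sub_distrib]
        refine Finset.sum_congr rfl (fun t _ => ?_)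
        rcases hQv t ω with h | h <;> rw [h] <;> ring
      rw [hsum1] at h1
      rw [hsum2] at h2
      constructor
      · linarith
      · linarith
    calc ENNReal.ofReal (1 - δ) = 1 - ENNReal.ofReal δ := by
          rw [← ENNReal.ofReal_one, ← ENNReal.ofReal_sub _ hδ0.le]
      _ ≤ 1 - μ B := by
          exact tsub_le_tsub_left hBle 1
      _ = μ Bᶜ := (prob_compl_eq_one_sub hBmeas).symm
      _ ≤ _ := measure_mono hsub
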